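/- Let q be a prime power, n ≥ 2 and m ≥ 2 integers, β ∈ F_{q^n}^*, and j ∈ {1,...,m}. Let e be a positive divisor of q^n − 1 and let p_1, ..., p_r be all the primes dividing q^n − 1 that do not divide e; set e_1 = ... = e_m = e. Let g ∈ F_q[x] be a monic divisor of x^n − 1 and let h_1, ..., h_s ∈ F_q[x] be all the monic irreducible polynomials dividing x^n − 1 that do not divide g. Then N_j(q^n−1, ..., q^n−1, x^n−1) ≥ Σ_{t=1}^{m} Σ_{i=1}^{r} N_j(e_1, ..., e_{t−1}, p_i·e_t, e_{t+1}, ..., e_m, g) + Σ_{i=1}^{s} N_j(e_1, ..., e_m, h_i·g) − (m·r + s − 1) · N_j(e_1, ..., e_m, g). -/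

import Mathlib

open Polynomial

/-- An element of a finite field `E` is primitive if it generates the cyclic group `Eˣ`,
i.e. its multiplicative order is `|E| - 1`. -/
def IsPrimitiveElem {E : Type*} [Field E] [Fintype E] (α : E) : Prop :=
  orderOf α = Fintype.card E - 1

/-- An element `g` of a degree-`n` extension `E` of a finite field `F` is normal over `F`
if `g, g^q, …, g^(q^(n-1))` (with `q = |F|`) is an `F`-basis of `E`. -/
def IsNormalElem (F : Type*) {E : Type*} [Field F] [Field E] [Algebra F E] [Fintype F]
    (n : ℕ) (g : E) : Prop :=
  ∃ b : Module.Basis (Fin n) F E, ∀ i : Fin n, b i = g ^ Fintype.card F ^ (i : ℕ)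

/-- `α` is `e`-free: for every divisor `d ≠ 1` of `e`, `α` is not a `d`-th power in `E`. -/
def IsEFree {E : Type*} [Field E] (e : ℕ) (α : E) : Prop :=
  ∀ d : ℕ, d ∣ e → d ≠ 1 → ¬ ∃ β : E, α = β ^ d

/-- The `F_q[x]`-module action on `E`: `f ∘ α = Σ aᵢ α^(qⁱ)` for `f = Σ aᵢ xⁱ`. -/
def polyAction {F E : Type*} [Field F] [Field E] [Algebra F E] [Fintype F]
    (f : Polynomial F) (α : E) : E :=
  f.sum fun i a => algebraMap F E a * α ^ Fintype.card F ^ i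

/-- `α` is `g`-free: for every monic divisor `h ≠ 1` of `g`, `α` is not of the form
`h ∘ β` for the `F_q[x]`-module action on `E`. -/
def IsGFree {F E : Type*} [Field F] [Field E] [Algebra F E] [Fintype F]
    (g : Polynomial F) (α : E) : Prop :=
  ∀ h : Polynomial F, h.Monic → h ∣ g → h ≠ 1 → ¬ ∃ β : E, α = polyAction h β

/-- `W t` is the number of squarefree positive divisors of `t`. -/
noncomputable def Wnat (t : ℕ) : ℕ := Set.ncard {d : ℕ | Squarefree d ∧ d ∣ t}

/-- `W f` is the number of monic squarefree divisors of `f`. -/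
noncomputable def Wpoly {F : Type*} [Field F] (f : Polynomial F) : ℕ :=
  Set.ncard {h : Polynomial F | h.Monic ∧ Squarefree h ∧ h ∣ f}

/-- `Nj β e g j` counts the `α ∈ E` such that `α + (i-1)β` is `e i`-free for all `i`
and `α + (j-1)β` is `g`-free (indices shifted to start at `0`). -/
noncomputable def Nj {F E : Type*} [Field F] [Field E] [Algebra F E] [Fintype F]
    {m : ℕ} (β : E) (e : Fin m → ℕ) (g : Polynomial F) (j : Fin m) : ℕ :=
  Set.ncard {α : E | (∀ i : Fin m, IsEFree (e i) (α + (i : ℕ) • β)) ∧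
    IsGFree g (α + (j : ℕ) • β)}

lemma polyAction_mul {F E : Type*} [Field F] [Field E] [Algebra F E] [Fintype F]
    (u v : Polynomial F) (α : E) :
    polyAction (u * v) α = polyAction u (polyAction v α) := by
  classical
  obtain ⟨k, hp, hcard⟩ := FiniteField.card F (ringChar F)
  haveI : Fact (Nat.Prime (ringChar F)) := ⟨hp⟩
  haveI : CharP E (ringChar F) :=
    charP_of_injective_algebraMap (algebraMap F E).injective (ringChar F)
  set φ : Module.End F E :=
    { toFun := fun x => x ^ Fintype.card F
      map_add' := by
        intro x y
        simp only [hcard]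
        exact add_pow_char_pow x y (ringChar F) k
      map_smul' := by
        intro a x
        simp only [RingHom.id_apply, Algebra.smul_def, mul_pow, ← map_pow,
          FiniteField.pow_card] } with hφ
  have hpow : ∀ (i : ℕ) (x : E), (φ ^ i) x = x ^ Fintype.card F ^ i := by
    intro i
    induction i with
    | zero => intro x; simp
    | succ i ih =>
      intro x
      rw [pow_succ, Module.End.mul_apply]
      have : φ x = x ^ Fintype.card F := rfl
      rw [this, ih, ← pow_mul, pow_succ, mul_comm]
  have key : ∀ (f : Polynomial F) (x : E), polyAction f x = (Polynomial.aeval φ f) x := by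
    intro f x
    rw [Polynomial.aeval_def, Polynomial.eval₂_eq_sum]
    unfold polyAction
    rw [Polynomial.sum_def, Polynomial.sum_def, LinearMap.sum_apply]
    refine Finset.sum_congr rfl fun i _ => ?_
    rw [Module.End.mul_apply, Module.algebraMap_end_apply, hpow, Algebra.smul_def]
  rw [key, key, key, map_mul, Module.End.mul_apply]

lemma sieve {α ι : Type*} [Finite α] [DecidableEq ι] (s : Finset ι) (A : Set α)
    (S : ι → Set α) (hS : ∀ i ∈ s, S i ⊆ A) :
    (∑ i ∈ s, ((S i).ncard : ℤ)) - ((s.card : ℤ) - 1) * (A.ncard : ℤ) ≤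
      ((A ∩ ⋂ i ∈ s, S i).ncard : ℤ) := by
  induction s using Finset.induction_on with
  | empty => simp
  | @insert a s ha ih =>
    have hXA : A ∩ ⋂ i ∈ s, S i ⊆ A := Set.inter_subset_left
    have hYA : S a ⊆ A := hS a (Finset.mem_insert_self a s)
    have hih := ih fun i hi => hS i (Finset.mem_insert_of_mem hi)
    have hun : (((A ∩ ⋂ i ∈ s, S i) ∪ S a).ncard : ℤ) ≤ (A.ncard : ℤ) := by
      exact_mod_cast Set.ncard_le_ncard (Set.union_subset hXA hYA) (Set.toFinite A)
    have hkey : (((A ∩ ⋂ i ∈ s, S i) ∪ S a).ncard : ℤ) + (((A ∩ ⋂ i ∈ s, S i) ∩ S a).ncard : ℤ)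
        = ((A ∩ ⋂ i ∈ s, S i).ncard : ℤ) + ((S a).ncard : ℤ) := by
      exact_mod_cast Set.ncard_union_add_ncard_inter _ _ (Set.toFinite _) (Set.toFinite _)
    have hset : A ∩ ⋂ i ∈ insert a s, S i = (A ∩ ⋂ i ∈ s, S i) ∩ S a := by
      rw [Finset.set_biInter_insert]
      ext x; simp only [Set.mem_inter_iff]; tauto
    rw [hset, Finset.sum_insert ha, Finset.card_insert_of_notMem ha]
    push_cast
    linarith

theorem stmt_9 (q n m : ℕ) (hq : IsPrimePow q) (hn : 2 ≤ n) (hm : 2 ≤ m)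
    (F E : Type) [Field F] [Field E] [Algebra F E] [Fintype F] [Fintype E]
    (hF : Fintype.card F = q) (hE : Fintype.card E = q ^ n)
    (β : E) (hβ : β ≠ 0) (j : Fin m)
    (e : ℕ) (he : 0 < e) (hed : e ∣ q ^ n - 1)
    (P : Finset ℕ) (hP : ∀ p : ℕ, p ∈ P ↔ p.Prime ∧ p ∣ q ^ n - 1 ∧ ¬ p ∣ e)
    (g : Polynomial F) (hgm : g.Monic) (hgd : g ∣ X ^ n - 1)
    (H : Finset (Polynomial F))
    (hH : ∀ h : Polynomial F, h ∈ H ↔ h.Monic ∧ Irreducible h ∧ h ∣ X ^ n - 1 ∧ ¬ h ∣ g) :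
    (Nj β (fun _ => q ^ n - 1) ((X : Polynomial F) ^ n - 1) j : ℤ) ≥
      (∑ t : Fin m, ∑ p ∈ P, (Nj β (Function.update (fun _ => e) t (p * e)) g j : ℤ)) +
      (∑ h ∈ H, (Nj β (fun _ : Fin m => e) (h * g) j : ℤ)) -
      ((m : ℤ) * P.card + H.card - 1) * (Nj β (fun _ : Fin m => e) g j : ℤ) := by
  classical
  set A : Set E := {α : E | (∀ i : Fin m, IsEFree e (α + (i : ℕ) • β)) ∧
    IsGFree g (α + (j : ℕ) • β)} with hAdef
  set S : (Fin m × ℕ) ⊕ Polynomial F → Set E := Sum.elim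
    (fun tp => {α : E | (∀ i : Fin m,
        IsEFree (Function.update (fun _ => e) tp.1 (tp.2 * e) i) (α + (i : ℕ) • β)) ∧
      IsGFree g (α + (j : ℕ) • β)})
    (fun h => {α : E | (∀ i : Fin m, IsEFree e (α + (i : ℕ) • β)) ∧
      IsGFree (h * g) (α + (j : ℕ) • β)}) with hSdef
  set s : Finset ((Fin m × ℕ) ⊕ Polynomial F) := (Finset.univ ×ˢ P).disjSum H with hsdef
  have hsub : ∀ i ∈ s, S i ⊆ A := by
    rintro (⟨t, p⟩ | h) hi α hα
    · simp only [hSdef, Sum.elim_inl, Set.mem_setOf_eq] at hα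
      simp only [hAdef, Set.mem_setOf_eq]
      refine ⟨fun i d hd hd1 => hα.1 i d (hd.trans ?_) hd1, hα.2⟩
      rcases eq_or_ne i t with rfl | hne
      · rw [Function.update_self]; exact dvd_mul_left e p
      · rw [Function.update_of_ne hne]
    · simp only [hSdef, Sum.elim_inr, Set.mem_setOf_eq] at hα
      simp only [hAdef, Set.mem_setOf_eq]
      exact ⟨hα.1, fun h' hm' hd' h1' => hα.2 h' hm' (hd'.mul_left h) h1'⟩
  have hfull : A ∩ ⋂ i ∈ s, S i ⊆
      {α : E | (∀ i : Fin m, IsEFree (q ^ n - 1) (α + (i : ℕ) • β)) ∧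
        IsGFree ((X : Polynomial F) ^ n - 1) (α + (j : ℕ) • β)} := by
    rintro α ⟨hαA, hαI⟩
    have hαI' : ∀ i ∈ s, α ∈ S i := Set.mem_iInter₂.mp hαI
    simp only [hAdef, Set.mem_setOf_eq] at hαA
    constructor
    · intro i d hd hd1 hex
      obtain ⟨γ, hγ⟩ := hex
      obtain ⟨p, hp, hpd⟩ := Nat.exists_prime_and_dvd hd1
      have hγ2 : α + (i : ℕ) • β = (γ ^ (d / p)) ^ p := by
        rw [hγ, ← pow_mul, Nat.div_mul_cancel hpd]
      by_cases hpe : p ∣ e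
      · exact hαA.1 i p hpe hp.ne_one ⟨_, hγ2⟩
      · have hpP : p ∈ P := (hP p).2 ⟨hp, hpd.trans hd, hpe⟩
        have hmem : Sum.inl (i, p) ∈ s := by
          rw [hsdef]
          exact Finset.inl_mem_disjSum.2 (Finset.mem_product.2 ⟨Finset.mem_univ _, hpP⟩)
        have hthis := hαI' _ hmem
        simp only [hSdef, Sum.elim_inl, Set.mem_setOf_eq] at hthis
        refine hthis.1 i p ?_ hp.ne_one ⟨_, hγ2⟩
        rw [Function.update_self]
        exact dvd_mul_right p e
    · intro h' hm' hd' h1' hex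
      obtain ⟨γ, hγ⟩ := hex
      obtain ⟨π, hπm, hπi, hπd⟩ := h'.exists_monic_irreducible_factor
        (fun hu => h1' (hm'.eq_one_of_isUnit hu))
      obtain ⟨c, hc⟩ := hπd
      have hγ2 : α + (j : ℕ) • β = polyAction π (polyAction c γ) := by
        rw [hγ, hc, polyAction_mul]
      by_cases hπg : π ∣ g
      · exact hαA.2 π hπm hπg hπi.ne_one ⟨_, hγ2⟩
      · have hπH : π ∈ H := (hH π).2 ⟨hπm, hπi, (Dvd.intro c hc.symm).trans hd', hπg⟩
        have hmem : Sum.inr π ∈ s := by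
          rw [hsdef]; exact Finset.inr_mem_disjSum.2 hπH
        have hthis := hαI' _ hmem
        simp only [hSdef, Sum.elim_inr, Set.mem_setOf_eq] at hthis
        exact hthis.2 π hπm (dvd_mul_right π g) hπi.ne_one ⟨_, hγ2⟩
  have hsieve := sieve s A S hsub
  have hle : ((A ∩ ⋂ i ∈ s, S i).ncard : ℤ) ≤
      (Nj β (fun _ => q ^ n - 1) ((X : Polynomial F) ^ n - 1) j : ℤ) := by
    have := Set.ncard_le_ncard hfull (Set.toFinite _)
    simp only [Nj]
    exact_mod_cast this
  have hsum1 : ∑ i ∈ s, ((S i).ncard : ℤ) =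
      (∑ t : Fin m, ∑ p ∈ P, (Nj β (Function.update (fun _ => e) t (p * e)) g j : ℤ)) +
      ∑ h ∈ H, (Nj β (fun _ : Fin m => e) (h * g) j : ℤ) := by
    rw [hsdef, Finset.sum_disjSum, Finset.sum_product]
    simp only [hSdef, Sum.elim_inl, Sum.elim_inr, Nj]
  have hcard : (s.card : ℤ) = (m : ℤ) * P.card + H.card := by
    rw [hsdef, Finset.card_disjSum, Finset.card_product, Finset.card_univ, Fintype.card_fin]
    push_cast
    ring
  have hA' : (A.ncard : ℤ) = (Nj β (fun _ : Fin m => e) g j : ℤ) := by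
    simp only [Nj, hAdef]
  rw [ge_iff_le]
  calc (∑ t : Fin m, ∑ p ∈ P, (Nj β (Function.update (fun _ => e) t (p * e)) g j : ℤ)) +
      (∑ h ∈ H, (Nj β (fun _ : Fin m => e) (h * g) j : ℤ)) -
      ((m : ℤ) * P.card + H.card - 1) * (Nj β (fun _ : Fin m => e) g j : ℤ)
      = (∑ i ∈ s, ((S i).ncard : ℤ)) - ((s.card : ℤ) - 1) * (A.ncard : ℤ) := by
        rw [hsum1, hcard, hA']
    _ ≤ ((A ∩ ⋂ i ∈ s, S i).ncard : ℤ) := hsieve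
    _ ≤ _ := hle
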